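/- Let v,w ∈ L. For all x ∈ E, t ∈ [0, t*(x)) and u ≥ 0: J(v,w)(φ(x,t), u) = e^{αt + Λ(x,t)} [ J(v,w)(x, t+u) − F(x,t) − Iw(x,t) ]. -/

import Mathlib

open MeasureTheory Filter Set

/-- The class **L** of functions continuous along the flow, with Lipschitz constants. -/
structure IsInL {d : ℕ} (E : Set (EuclideanSpace ℝ (Fin d)))
    (φ : EuclideanSpace ℝ (Fin d) → ℝ → EuclideanSpace ℝ (Fin d))
    (tstar : EuclideanSpace ℝ (Fin d) → ℝ)
    (w : EuclideanSpace ℝ (Fin d) → ℝ) (Cw Lw1 Lw2 Lws : ℝ) : Prop where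
  bdd : ∀ x ∈ E, |w x| ≤ Cw
  cont : ∀ x ∈ E, ContinuousOn (fun t => w (φ x t)) (Set.Ico 0 (tstar x))
  lim : ∀ x ∈ E, Filter.Tendsto (fun t => w (φ x t))
    (nhdsWithin (tstar x) (Set.Iio (tstar x))) (nhds (w (φ x (tstar x))))
  lip1 : ∀ x ∈ E, ∀ y ∈ E, ∀ u ∈ Set.Icc (0:ℝ) (min (tstar x) (tstar y)),
    |w (φ x u) - w (φ y u)| ≤ Lw1 * ‖x - y‖
  lip2 : ∀ x ∈ E, ∀ t ∈ Set.Icc (0:ℝ) (tstar x), ∀ s ∈ Set.Icc (0:ℝ) (tstar x),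
    |w (φ x t) - w (φ x s)| ≤ Lw2 * |t - s|
  lipstar : ∀ x ∈ E, ∀ y ∈ E,
    |w (φ x (tstar x)) - w (φ y (tstar y))| ≤ Lws * ‖x - y‖

theorem stmt_13
    {d : ℕ}
    (E : Set (EuclideanSpace ℝ (Fin d)))
    (hE_open : IsOpen E)
    (φ : EuclideanSpace ℝ (Fin d) → ℝ → EuclideanSpace ℝ (Fin d))
    (hφ_cont : Continuous fun p : EuclideanSpace ℝ (Fin d) × ℝ => φ p.1 p.2)
    (hφ_homeo : ∀ t : ℝ, ∃ h : EuclideanSpace ℝ (Fin d) ≃ₜ EuclideanSpace ℝ (Fin d), ∀ x, h x = φ x t)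
    (hφ_group : ∀ x s t, φ x (t + s) = φ (φ x s) t)
    (tstar : EuclideanSpace ℝ (Fin d) → ℝ)
    (htstar_def : ∀ x ∈ E, tstar x = sInf {t : ℝ | 0 < t ∧ φ x t ∈ frontier E})
    (Ctstar : ℝ) (htstar_bdd : ∀ x ∈ E, tstar x ≤ Ctstar)
    (Ltstar : ℝ) (htstar_lip : ∀ x ∈ E, ∀ y ∈ E, |tstar x - tstar y| ≤ Ltstar * ‖x - y‖)
    (lam : EuclideanSpace ℝ (Fin d) → ℝ)
    (hlam_meas : Measurable lam)
    (hlam_nonneg : ∀ x, 0 ≤ lam x)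
    (Clam : ℝ) (hlam_bdd : ∀ x, lam x ≤ Clam)
    (Llam : ℝ)
    (hlam_lip : ∀ x ∈ E, ∀ y ∈ E, ∀ u : ℝ, 0 ≤ u → u < min (tstar x) (tstar y) →
      |lam (φ x u) - lam (φ y u)| ≤ Llam * ‖x - y‖)
    (Lam : EuclideanSpace ℝ (Fin d) → ℝ → ℝ)
    (hLam_def : ∀ x t, Lam x t = ∫ s in (0:ℝ)..t, lam (φ x s))
    (α : ℝ) (hα_pos : 0 < α)
    (f : EuclideanSpace ℝ (Fin d) → ℝ) (Cf Lf1 Lf2 Lfs : ℝ)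
    (hf_L : IsInL E φ tstar f Cf Lf1 Lf2 Lfs)
    (hf_pos : ∀ x ∈ E, 0 < f x)
    (F : EuclideanSpace ℝ (Fin d) → ℝ → ℝ)
    (hF_def : ∀ x t, F x t =
      ∫ s in (0:ℝ)..(min t (tstar x)), Real.exp (-(α * s) - Lam x s) * f (φ x s))
    (Q : ProbabilityTheory.Kernel (EuclideanSpace ℝ (Fin d)) (EuclideanSpace ℝ (Fin d)))
    (hQ_markov : ProbabilityTheory.IsMarkovKernel Q)
    (hQ_supp : ∀ x, Q x (E \ {x}) = 1)
    (Qop : (EuclideanSpace ℝ (Fin d) → ℝ) → EuclideanSpace ℝ (Fin d) → ℝ)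
    (hQop_def : ∀ (g : EuclideanSpace ℝ (Fin d) → ℝ) (x : EuclideanSpace ℝ (Fin d)), Qop g x = ∫ z, g z ∂(Q x))
    (LQ : ℝ)
    (hQ_lip1 : ∀ (g : EuclideanSpace ℝ (Fin d) → ℝ) (Cg Lg1 Lg2 Lgs : ℝ),
      IsInL E φ tstar g Cg Lg1 Lg2 Lgs →
      ∀ x ∈ E, ∀ y ∈ E, ∀ u ∈ Set.Icc (0:ℝ) (min (tstar x) (tstar y)),
        |Qop g (φ x u) - Qop g (φ y u)| ≤ LQ * Lg1 * ‖x - y‖)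
    (hQ_lipstar : ∀ (g : EuclideanSpace ℝ (Fin d) → ℝ) (Cg Lg1 Lg2 Lgs : ℝ),
      IsInL E φ tstar g Cg Lg1 Lg2 Lgs →
      ∀ x ∈ E, ∀ y ∈ E,
        |Qop g (φ x (tstar x)) - Qop g (φ y (tstar y))| ≤ LQ * Lgs * ‖x - y‖)
    (v : EuclideanSpace ℝ (Fin d) → ℝ) (Cv Lv1 Lv2 Lvs : ℝ)
    (hv_L : IsInL E φ tstar v Cv Lv1 Lv2 Lvs)
    (w : EuclideanSpace ℝ (Fin d) → ℝ) (Cw Lw1 Lw2 Lws : ℝ)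
    (hw_L : IsInL E φ tstar w Cw Lw1 Lw2 Lws)
    (H : (EuclideanSpace ℝ (Fin d) → ℝ) → EuclideanSpace ℝ (Fin d) → ℝ → ℝ)
    (hH_def : ∀ (g : EuclideanSpace ℝ (Fin d) → ℝ) (x : EuclideanSpace ℝ (Fin d)) (t : ℝ), H g x t =
      Real.exp (-(α * min t (tstar x)) - Lam x (min t (tstar x))) * g (φ x (min t (tstar x))))
    (Iop : (EuclideanSpace ℝ (Fin d) → ℝ) → EuclideanSpace ℝ (Fin d) → ℝ → ℝ)
    (hIop_def : ∀ (g : EuclideanSpace ℝ (Fin d) → ℝ) (x : EuclideanSpace ℝ (Fin d)) (t : ℝ), Iop g x t =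
      ∫ s in (0:ℝ)..(min t (tstar x)),
        Real.exp (-(α * s) - Lam x s) * lam (φ x s) * Qop g (φ x s))
    (J : (EuclideanSpace ℝ (Fin d) → ℝ) → (EuclideanSpace ℝ (Fin d) → ℝ) → EuclideanSpace ℝ (Fin d) → ℝ → ℝ)
    (hJ_def : ∀ (g₁ g₂ : EuclideanSpace ℝ (Fin d) → ℝ) (x : EuclideanSpace ℝ (Fin d)) (t : ℝ),
      J g₁ g₂ x t = F x t + H g₁ x t + Iop g₂ x t)
    :
    ∀ x ∈ E, ∀ t : ℝ, 0 ≤ t → t < tstar x → ∀ u : ℝ, 0 ≤ u →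
      J v w (φ x t) u =
        Real.exp (α * t + Lam x t) * (J v w x (t + u) - F x t - Iop w x t) := by
    intro x hx t ht0 htT u hu
    -- notation
    set T := tstar x with hT
    have hφx_cont : Continuous (φ x) :=
      hφ_cont.comp (continuous_const.prodMk continuous_id)
    -- φ z 0 = z
    have hφ0 : ∀ z, φ z 0 = z := by
      intro z
      obtain ⟨h, hh⟩ := hφ_homeo 0
      have h1 : φ z (0 + 0) = φ (φ z 0) 0 := hφ_group z 0 0
      rw [zero_add, ← hh, ← hh] at h1
      have h2 : φ z 0 = h z := (hh z).symm
      rw [h2]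
      exact (h.injective h1).symm
    -- the set defining tstar
    have hSx : T = sInf {r : ℝ | 0 < r ∧ φ x r ∈ frontier E} := htstar_def x hx
    have hSx_bdd : BddBelow {r : ℝ | 0 < r ∧ φ x r ∈ frontier E} :=
      ⟨0, fun r hr => le_of_lt hr.1⟩
    have hSx_ge : ∀ r ∈ {r : ℝ | 0 < r ∧ φ x r ∈ frontier E}, T ≤ r := by
      intro r hr; rw [hSx]; exact csInf_le hSx_bdd hr
    -- the path stays in E
    have hpath : ∀ s : ℝ, 0 ≤ s → s < T → φ x s ∈ E := by
      intro s hs0 hsT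
      by_contra hout
      have hcover : Set.Icc (0:ℝ) s ⊆ (φ x ·) ⁻¹' E ∪ (φ x ·) ⁻¹' (closure E)ᶜ := by
        intro r hr
        have hnf : φ x r ∉ frontier E := by
          intro hf
          rcases eq_or_lt_of_le hr.1 with h0 | h0
          · rw [← h0, hφ0] at hf
            exact hf.2 (by rw [hE_open.interior_eq]; exact hx)
          · have : T ≤ r := hSx_ge r ⟨h0, hf⟩
            linarith [hr.2]
        by_cases hcl : φ x r ∈ closure E
        · left
          by_contra hne
          exact hnf ⟨hcl, by rw [hE_open.interior_eq]; exact hne⟩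
        · right; exact hcl
      have h0mem : ((Set.Icc (0:ℝ) s) ∩ (φ x ·) ⁻¹' E).Nonempty := by
        refine ⟨0, ⟨le_refl 0, hs0⟩, ?_⟩
        show φ x 0 ∈ E
        rw [hφ0]; exact hx
      have hsmem : ((Set.Icc (0:ℝ) s) ∩ (φ x ·) ⁻¹' (closure E)ᶜ).Nonempty := by
        refine ⟨s, ⟨hs0, le_refl s⟩, ?_⟩
        show φ x s ∉ closure E
        intro hcl
        by_cases hE : φ x s ∈ E
        · exact hout hE
        · -- φ x s ∈ frontier E : contradiction with hnf-like argument
          have hf : φ x s ∈ frontier E := ⟨hcl, by rw [hE_open.interior_eq]; exact hE⟩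
          rcases eq_or_lt_of_le hs0 with h0 | h0
          · rw [← h0, hφ0] at hE
            exact hE hx
          · have : T ≤ s := hSx_ge s ⟨h0, hf⟩
            linarith
      obtain ⟨r, hr, hrE, hrC⟩ := isPreconnected_Icc (u := (φ x ·) ⁻¹' E)
        (v := (φ x ·) ⁻¹' (closure E)ᶜ) (hE_open.preimage hφx_cont)
        (isClosed_closure.isOpen_compl.preimage hφx_cont) hcover h0mem hsmem
      exact hrC (subset_closure hrE)
    have hSx_ne : {r : ℝ | 0 < r ∧ φ x r ∈ frontier E}.Nonempty := by
      by_contra hne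
      rw [Set.not_nonempty_iff_eq_empty] at hne
      rw [hne, Real.sInf_empty] at hSx
      linarith
    -- tstar shifts along the flow
    have htstar_shift : ∀ s : ℝ, 0 ≤ s → s < T → tstar (φ x s) = T - s := by
      intro s hs0 hsT
      have hy : φ x s ∈ E := hpath s hs0 hsT
      have hSy : tstar (φ x s) = sInf {r : ℝ | 0 < r ∧ φ (φ x s) r ∈ frontier E} :=
        htstar_def _ hy
      have hset : {r : ℝ | 0 < r ∧ φ (φ x s) r ∈ frontier E}
          = {r : ℝ | r + s ∈ {q : ℝ | 0 < q ∧ φ x q ∈ frontier E}} := by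
        ext r
        simp only [Set.mem_setOf_eq, ← hφ_group x s r]
        constructor
        · rintro ⟨hr, hf⟩
          exact ⟨by linarith, hf⟩
        · rintro ⟨hr, hf⟩
          refine ⟨?_, hf⟩
          have : T ≤ r + s := hSx_ge _ ⟨hr, hf⟩
          linarith
      rw [hSy, hset]
      -- sInf of translated set
      have hbdd : BddBelow {r : ℝ | r + s ∈ {q : ℝ | 0 < q ∧ φ x q ∈ frontier E}} := by
        refine ⟨-s, fun r hr => ?_⟩
        have := hr.1
        linarith
      have hne : {r : ℝ | r + s ∈ {q : ℝ | 0 < q ∧ φ x q ∈ frontier E}}.Nonempty := by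
        obtain ⟨r₀, hr₀⟩ := hSx_ne
        exact ⟨r₀ - s, by simpa using hr₀⟩
      apply le_antisymm
      · rw [hSx]
        rw [le_sub_iff_add_le]
        refine le_csInf hSx_ne fun r hr => ?_
        have hmem : r - s ∈ {r : ℝ | r + s ∈ {q : ℝ | 0 < q ∧ φ x q ∈ frontier E}} := by
          simpa using hr
        linarith [csInf_le hbdd hmem]
      · refine le_csInf hne fun r hr => ?_
        have : T ≤ r + s := hSx_ge _ hr
        linarith
    -- basic integrability of lam along the path
    have hlam_meas' : Measurable (fun s : ℝ => lam (φ x s)) := hlam_meas.comp hφx_cont.measurable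
    have hlam_int : ∀ a b : ℝ, IntervalIntegrable (fun s => lam (φ x s)) volume a b := by
      intro a b
      apply IntervalIntegrable.mono_fun' (g := fun _ => Clam)
      · exact intervalIntegrable_const
      · exact hlam_meas'.aestronglyMeasurable.restrict
      · filter_upwards with s
        rw [Real.norm_eq_abs, abs_of_nonneg (hlam_nonneg _)]
        exact hlam_bdd _
    have hLam_cont : Continuous (Lam x) := by
      have := intervalIntegral.continuous_primitive hlam_int 0
      simpa [← hLam_def] using this
    have hLam_nonneg : ∀ s : ℝ, 0 ≤ s → 0 ≤ Lam x s := by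
      intro s hs
      rw [hLam_def]
      exact intervalIntegral.integral_nonneg hs (fun r _ => hlam_nonneg _)
    -- Lam shift
    have hLam_shift : ∀ s : ℝ, Lam (φ x t) s = Lam x (s + t) - Lam x t := by
      intro s
      have hflow : ∀ r : ℝ, φ (φ x t) r = φ x (r + t) := fun r => (hφ_group x t r).symm
      rw [hLam_def, hLam_def, hLam_def]
      have h1 : (fun r : ℝ => lam (φ (φ x t) r)) = fun r => lam (φ x (r + t)) := by
        funext r; rw [hflow]
      rw [h1, intervalIntegral.integral_comp_add_right (fun r => lam (φ x r)) t, zero_add]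
      rw [intervalIntegral.integral_interval_sub_left (hlam_int 0 (s + t)) (hlam_int 0 t)]

    -- shifted point
    set y := φ x t with hy_def
    have hyE : y ∈ E := hpath t ht0 htT
    have hTy : tstar y = T - t := htstar_shift t ht0 htT
    have hflow : ∀ r : ℝ, φ y r = φ x (r + t) := fun r => (hφ_group x t r).symm
    set m := min u (T - t) with hm
    have hm0 : 0 ≤ m := le_min hu (by linarith)
    have hmT : m + t ≤ T := by
      have := min_le_right u (T - t); linarith
    have hminu : min u (tstar y) = m := by rw [hTy]
    have hmin1 : min (t + u) T = t + m := by
      have h1 : min (t + u) (t + (T - t)) = t + min u (T - t) := min_add_add_left t u (T - t)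
      have h2 : t + (T - t) = T := by ring
      rw [h2] at h1
      rw [h1]
    have hmint : min t T = t := min_eq_left (le_of_lt htT)
    have hexp : ∀ s : ℝ, Real.exp (-(α * s) - Lam y s)
        = Real.exp (α * t + Lam x t) * Real.exp (-(α * (s + t)) - Lam x (s + t)) := by
      intro s
      rw [hLam_shift s, ← Real.exp_add]
      congr 1
      ring
    have hexp_le_one : ∀ s : ℝ, 0 ≤ s → Real.exp (-(α * s) - Lam x s) ≤ 1 := by
      intro s hs
      rw [show (1:ℝ) = Real.exp 0 from (Real.exp_zero).symm]
      apply Real.exp_le_exp.mpr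
      nlinarith [hLam_nonneg s hs, hα_pos.le]
    have hexp_cont : Continuous fun s : ℝ => Real.exp (-(α * s) - Lam x s) :=
      Real.continuous_exp.comp (((continuous_const.mul continuous_id).neg).sub hLam_cont)
    -- generic integrability
    have key_int : ∀ (g : ℝ → ℝ) (C : ℝ),
        AEStronglyMeasurable g (volume.restrict (Set.Ioo 0 T)) →
        (∀ s ∈ Set.Ioo (0:ℝ) T, |g s| ≤ C) →
        ∀ c : ℝ, 0 ≤ c → c ≤ T → IntervalIntegrable g volume 0 c := by
      intro g C hmeas hbd c hc0 hcT
      rw [intervalIntegrable_iff_integrableOn_Ioc_of_le hc0]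
      have heq : volume.restrict (Set.Ioc (0:ℝ) c) = volume.restrict (Set.Ioo (0:ℝ) c) :=
        (Measure.restrict_congr_set Ioo_ae_eq_Ioc).symm
      unfold IntegrableOn
      rw [heq]
      have hmono : volume.restrict (Set.Ioo (0:ℝ) c) ≤ volume.restrict (Set.Ioo (0:ℝ) T) :=
        Measure.restrict_mono (Set.Ioo_subset_Ioo le_rfl hcT) le_rfl
      refine Integrable.mono' (integrable_const C) (hmeas.mono_measure hmono) ?_
      rw [ae_restrict_iff' measurableSet_Ioo]
      filter_upwards with s hs
      rw [Real.norm_eq_abs]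
      exact hbd s (Set.Ioo_subset_Ioo le_rfl hcT hs)
    -- boundedness of Qop w
    have hCw0 : 0 ≤ Cw := le_trans (abs_nonneg _) (hw_L.bdd x hx)
    haveI := hQ_markov
    have hQbdd : ∀ z, |Qop w z| ≤ Cw := by
      intro z
      rw [hQop_def]
      have hmeasE : MeasurableSet (E \ {z}) :=
        hE_open.measurableSet.diff (measurableSet_singleton z)
      have hcompl : (Q z) (E \ {z})ᶜ = 0 := by
        rw [measure_compl hmeasE (measure_ne_top _ _), hQ_supp z, measure_univ]
        simp
      have hae : ∀ᵐ z' ∂(Q z), z' ∈ E := by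
        refine measure_mono_null ?_ hcompl
        intro z' hz'
        simp only [Set.mem_compl_iff, Set.mem_diff, Set.mem_setOf_eq] at *
        tauto
      by_cases hInt : Integrable w (Q z)
      · have h1 : |∫ z', w z' ∂(Q z)| ≤ ∫ z', |w z'| ∂(Q z) := by
          simpa [Real.norm_eq_abs] using
            MeasureTheory.norm_integral_le_integral_norm (μ := Q z) w
        have h2 : ∫ z', |w z'| ∂(Q z) ≤ ∫ _z', Cw ∂(Q z) := by
          refine integral_mono_ae hInt.abs (integrable_const Cw) ?_
          filter_upwards [hae] with z' hz'
          exact hw_L.bdd z' hz'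
        have h3 : ∫ _z', Cw ∂(Q z) = Cw := by simp
        linarith
      · rw [integral_undef hInt]
        simpa using hCw0
    -- continuity of Qop w along the flow
    have hψ0 : ‖x - φ x 0‖ = 0 := by rw [hφ0]; simp
    have hψcont : Continuous fun δ : ℝ => ‖x - φ x δ‖ := (continuous_const.sub hφx_cont).norm
    have hQcont : ContinuousOn (fun s => Qop w (φ x s)) (Set.Ico 0 T) := by
      intro s₀ hs₀
      rw [ContinuousWithinAt, tendsto_iff_dist_tendsto_zero]
      apply squeeze_zero' (g := fun s => |LQ * Lw1| * ‖x - φ x |s - s₀|‖)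
      · exact Filter.Eventually.of_forall fun s => dist_nonneg
      · filter_upwards [self_mem_nhdsWithin] with s hs
        set a := min s s₀ with ha
        set b := max s s₀ with hb
        set δ := b - a with hδ
        have ha0 : 0 ≤ a := le_min hs.1 hs₀.1
        have hbT : b < T := max_lt hs.2 hs₀.2
        have hδ0 : 0 ≤ δ := by
          have := min_le_max (a := s) (b := s₀); rw [← ha, ← hb] at this; linarith
        have hδT : δ < T := by
          have : a ≤ b := by
            have := min_le_max (a := s) (b := s₀); rw [← ha, ← hb] at this; exact this
          linarith
        have hδE : φ x δ ∈ E := hpath δ hδ0 hδT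
        have hδstar : tstar (φ x δ) = T - δ := htstar_shift δ hδ0 hδT
        have hab : φ x b = φ (φ x δ) a := by
          rw [show b = a + δ by rw [hδ]; ring]
          exact hφ_group x δ a
        have hlip := hQ_lip1 w Cw Lw1 Lw2 Lws hw_L x hx (φ x δ) hδE a
          ⟨ha0, by rw [hδstar]; refine le_min ?_ ?_ <;> linarith⟩
        rw [← hab] at hlip
        have hdistab : dist (Qop w (φ x s)) (Qop w (φ x s₀)) = |Qop w (φ x a) - Qop w (φ x b)| := by
          rcases le_total s s₀ with h | h
          · rw [Real.dist_eq, ha, hb, min_eq_left h, max_eq_right h]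
          · rw [Real.dist_eq, ha, hb, min_eq_right h, max_eq_left h, abs_sub_comm]
        have hss₀ : |s - s₀| = δ := by
          rcases le_total s s₀ with h | h
          · rw [hδ, ha, hb, min_eq_left h, max_eq_right h, abs_sub_comm, abs_of_nonneg] ; linarith
          · rw [hδ, ha, hb, min_eq_right h, max_eq_left h, abs_of_nonneg] ; linarith
        rw [hdistab, hss₀]
        calc |Qop w (φ x a) - Qop w (φ x b)| ≤ LQ * Lw1 * ‖x - φ x δ‖ := hlip
          _ ≤ |LQ * Lw1| * ‖x - φ x δ‖ := by
              apply mul_le_mul_of_nonneg_right (le_abs_self _) (norm_nonneg _)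
      · have htend : Filter.Tendsto (fun s => |s - s₀|) (nhdsWithin s₀ (Set.Ico 0 T)) (nhds 0) := by
          have hc : Continuous fun s : ℝ => |s - s₀| := (continuous_id.sub continuous_const).abs
          have := (hc.tendsto s₀).mono_left (nhdsWithin_le_nhds (s := Set.Ico 0 T))
          simpa using this
        have := ((hψcont.tendsto 0).comp htend).const_mul |LQ * Lw1|
        simpa [hψ0] using this
    -- integrability of the two integrands
    have hfF_meas : AEStronglyMeasurable (fun s => Real.exp (-(α * s) - Lam x s) * f (φ x s))
        (volume.restrict (Set.Ioo 0 T)) := by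
      refine AEStronglyMeasurable.mul hexp_cont.aestronglyMeasurable.restrict ?_
      exact ((hf_L.cont x hx).mono Set.Ioo_subset_Ico_self).aestronglyMeasurable measurableSet_Ioo
    have hfF_bd : ∀ s ∈ Set.Ioo (0:ℝ) T, |Real.exp (-(α * s) - Lam x s) * f (φ x s)| ≤ Cf := by
      intro s hs
      rw [abs_mul, abs_of_nonneg (Real.exp_pos _).le]
      have h1 := hexp_le_one s hs.1.le
      have h2 := hf_L.bdd _ (hpath s hs.1.le hs.2)
      nlinarith [abs_nonneg (f (φ x s)), (Real.exp_pos (-(α * s) - Lam x s)).le]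
    have hFint : ∀ c : ℝ, 0 ≤ c → c ≤ T →
        IntervalIntegrable (fun s => Real.exp (-(α * s) - Lam x s) * f (φ x s)) volume 0 c :=
      key_int _ Cf hfF_meas hfF_bd
    have hfI_meas : AEStronglyMeasurable
        (fun s => Real.exp (-(α * s) - Lam x s) * lam (φ x s) * Qop w (φ x s))
        (volume.restrict (Set.Ioo 0 T)) := by
      refine AEStronglyMeasurable.mul (AEStronglyMeasurable.mul
        hexp_cont.aestronglyMeasurable.restrict hlam_meas'.aestronglyMeasurable.restrict) ?_
      exact (hQcont.mono Set.Ioo_subset_Ico_self).aestronglyMeasurable measurableSet_Ioo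
    have hfI_bd : ∀ s ∈ Set.Ioo (0:ℝ) T,
        |Real.exp (-(α * s) - Lam x s) * lam (φ x s) * Qop w (φ x s)| ≤ Clam * Cw := by
      intro s hs
      rw [abs_mul, abs_mul, abs_of_nonneg (Real.exp_pos _).le,
        abs_of_nonneg (hlam_nonneg _)]
      have h1 := hexp_le_one s hs.1.le
      have h2 := hlam_bdd (φ x s)
      have h3 := hQbdd (φ x s)
      have h4 := hlam_nonneg (φ x s)
      have he0 := (Real.exp_pos (-(α * s) - Lam x s)).le
      have h5 : Real.exp (-(α * s) - Lam x s) * lam (φ x s) ≤ Clam := by nlinarith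
      exact mul_le_mul h5 h3 (abs_nonneg _) (le_trans h4 h2)
    have hIint : ∀ c : ℝ, 0 ≤ c → c ≤ T → IntervalIntegrable
        (fun s => Real.exp (-(α * s) - Lam x s) * lam (φ x s) * Qop w (φ x s)) volume 0 c :=
      key_int _ (Clam * Cw) hfI_meas hfI_bd
    -- the three shift identities
    have hF_shift : F y u = Real.exp (α * t + Lam x t) * (F x (t + u) - F x t) := by
      rw [hF_def y u, hF_def x (t + u), hF_def x t, hminu, hmin1, hmint]
      rw [intervalIntegral.integral_interval_sub_left
        (hFint (t + m) (by linarith) (by linarith)) (hFint t ht0 htT.le)]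
      have h1 : (fun s => Real.exp (-(α * s) - Lam y s) * f (φ y s))
          = fun s => Real.exp (α * t + Lam x t) *
            (Real.exp (-(α * (s + t)) - Lam x (s + t)) * f (φ x (s + t))) := by
        funext s
        rw [hflow s, hexp s]
        ring
      rw [h1, intervalIntegral.integral_const_mul]
      congr 1
      rw [intervalIntegral.integral_comp_add_right
        (fun s => Real.exp (-(α * s) - Lam x s) * f (φ x s)) t, zero_add, add_comm m t]
    have hI_shift : Iop w y u = Real.exp (α * t + Lam x t) * (Iop w x (t + u) - Iop w x t) := by
      rw [hIop_def w y u, hIop_def w x (t + u), hIop_def w x t, hminu, hmin1, hmint]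
      rw [intervalIntegral.integral_interval_sub_left
        (hIint (t + m) (by linarith) (by linarith)) (hIint t ht0 htT.le)]
      have h1 : (fun s => Real.exp (-(α * s) - Lam y s) * lam (φ y s) * Qop w (φ y s))
          = fun s => Real.exp (α * t + Lam x t) *
            (Real.exp (-(α * (s + t)) - Lam x (s + t)) * lam (φ x (s + t)) * Qop w (φ x (s + t))) := by
        funext s
        rw [hflow s, hexp s]
        ring
      rw [h1, intervalIntegral.integral_const_mul]
      congr 1
      rw [intervalIntegral.integral_comp_add_right
        (fun s => Real.exp (-(α * s) - Lam x s) * lam (φ x s) * Qop w (φ x s)) t,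
        zero_add, add_comm m t]
    have hH_shift : H v y u = Real.exp (α * t + Lam x t) * H v x (t + u) := by
      rw [hH_def v y u, hH_def v x (t + u), hminu, hmin1]
      rw [show t + m = m + t from add_comm t m, ← hflow m, hLam_shift m, ← mul_assoc,
        ← Real.exp_add]
      congr 2
      ring
    rw [hJ_def v w y u, hJ_def v w x (t + u), hF_shift, hI_shift, hH_shift]
    ring
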